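/- Let n ≥ 1 and let r₁,…,rₙ be real numbers. There exist vectors e₁,…,eₙ ∈ ℝ³ with e₁ + ⋯ + eₙ = 0 and ‖eᵢ‖ = rᵢ for every i if and only if rᵢ ≥ 0 for all i and 2·rᵢ ≤ r₁ + ⋯ + rₙ for all i. -/

import Mathlib

noncomputable def vec3 (x y z : ℝ) : EuclideanSpace ℝ (Fin 3) :=
  (WithLp.equiv 2 (Fin 3 → ℝ)).symm ![x, y, z]

lemma norm_vec3 (x y z : ℝ) : ‖vec3 x y z‖ = Real.sqrt (x^2 + y^2 + z^2) := by
  rw [EuclideanSpace.norm_eq]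
  simp [vec3, Fin.sum_univ_three, sq_abs]

lemma vec3_add (x y z x' y' z' : ℝ) :
    vec3 x y z + vec3 x' y' z' = vec3 (x+x') (y+y') (z+z') := by
  ext i; fin_cases i <;> rfl

lemma vec3_zero : vec3 0 0 0 = 0 := by
  ext i; fin_cases i <;> rfl

lemma triangle_exists' (a b c : ℝ) (ha0 : 0 ≤ a) (hb0 : 0 ≤ b) (hc0 : 0 ≤ c)
    (hab : a ≤ b + c) (hbc : b ≤ a + c) (hca : c ≤ a + b) :
    ∃ u v w : EuclideanSpace ℝ (Fin 3),
      u + v + w = 0 ∧ ‖u‖ = a ∧ ‖v‖ = b ∧ ‖w‖ = c := by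
  rcases eq_or_lt_of_le ha0 with haz | hap
  · have hbceq : b = c := le_antisymm (by linarith) (by linarith)
    refine ⟨vec3 0 0 0, vec3 b 0 0, vec3 (-b) 0 0, ?_, ?_, ?_, ?_⟩
    · rw [vec3_add, vec3_add]; simpa using vec3_zero
    · rw [norm_vec3]; simp [← haz]
    · rw [norm_vec3]; simpa using Real.sqrt_sq hb0
    · rw [norm_vec3, ← hbceq]; simpa using Real.sqrt_sq hb0
  · have hx2 : ((a^2 + b^2 - c^2) / (2*a))^2 ≤ b^2 := by
      rw [div_pow, div_le_iff₀ (by positivity)]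
      nlinarith [mul_nonneg (mul_nonneg (mul_nonneg
        (by linarith : (0:ℝ) ≤ a+b+c) (by linarith : (0:ℝ) ≤ a+b-c))
        (by linarith : (0:ℝ) ≤ a-b+c)) (by linarith : (0:ℝ) ≤ -a+b+c)]
    set x : ℝ := (a^2 + b^2 - c^2) / (2*a) with hx
    have hy2 : (Real.sqrt (b^2 - x^2))^2 = b^2 - x^2 := Real.sq_sqrt (by linarith)
    set y : ℝ := Real.sqrt (b^2 - x^2) with hy
    have hax : a * x = (a^2+b^2-c^2)/2 := by
      rw [hx]; field_simp
    refine ⟨vec3 a 0 0, vec3 (-x) y 0, vec3 (x - a) (-y) 0, ?_, ?_, ?_, ?_⟩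
    · rw [vec3_add, vec3_add]
      rw [show a + -x + (x - a) = 0 by ring, show (0:ℝ) + y + -y = 0 by ring]
      simpa using vec3_zero
    · rw [norm_vec3]; simpa using Real.sqrt_sq ha0
    · rw [norm_vec3, show (-x)^2 + y^2 + 0^2 = b^2 by rw [hy2]; ring]
      exact Real.sqrt_sq hb0
    · rw [norm_vec3, show (x-a)^2 + (-y)^2 + 0^2 = c^2 by rw [neg_pow]; nlinarith [hy2]]
      exact Real.sqrt_sq hc0

lemma triangle_exists (s : Fin 3 → ℝ) (h0 : ∀ g, 0 ≤ s g) (h2 : ∀ g, 2 * s g ≤ ∑ g, s g) :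
    ∃ V : Fin 3 → EuclideanSpace ℝ (Fin 3), (∑ g, V g = 0) ∧ ∀ g, ‖V g‖ = s g := by
  have hS : ∑ g, s g = s 0 + s 1 + s 2 := by rw [Fin.sum_univ_three]
  obtain ⟨u, v, w, hsum, hu, hv, hw⟩ :=
    triangle_exists' (s 0) (s 1) (s 2) (h0 0) (h0 1) (h0 2)
      (by have := h2 0; rw [hS] at this; linarith)
      (by have := h2 1; rw [hS] at this; linarith)
      (by have := h2 2; rw [hS] at this; linarith)
  exact ⟨![u, v, w], by simpa [Fin.sum_univ_three] using hsum,
    fun g => by fin_cases g <;> assumption⟩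

open Finset in
lemma partition3 (n : ℕ) (r : Fin n → ℝ) (h0 : ∀ i, 0 ≤ r i)
    (h2 : ∀ i, 2 * r i ≤ ∑ j, r j) (hS : 0 < ∑ j, r j) :
    ∃ G : Fin n → Fin 3,
      ∀ g, 2 * ∑ i ∈ Finset.univ.filter (fun i => G i = g), r i ≤ ∑ j, r j := by
  classical
  obtain ⟨r', hr'eq, hr'0⟩ : ∃ r' : ℕ → ℝ, (∀ i : Fin n, r' (i : ℕ) = r i) ∧ ∀ m, 0 ≤ r' m :=
    ⟨fun m => if h : m < n then r ⟨m, h⟩ else 0, fun i => dif_pos i.isLt,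
     fun m => by dsimp only; split; exacts [h0 _, le_refl 0]⟩
  set S := ∑ j, r j with hSdef
  have htn : ∑ m ∈ range n, r' m = S := by
    rw [hSdef, ← Fin.sum_univ_eq_sum_range]
    exact Finset.sum_congr rfl fun i _ => hr'eq i
  have hn : 0 < n := by
    rcases Nat.eq_zero_or_pos n with h | h
    · rw [hSdef] at hS; subst h; simp at hS
    · exact h
  have hex : ∃ m, S/2 < ∑ m' ∈ range (m+1), r' m' :=
    ⟨n - 1, by rw [Nat.sub_add_cancel hn, htn]; linarith⟩
  obtain ⟨k, hk1, hk0, hkn⟩ : ∃ k, S/2 < ∑ m ∈ range (k+1), r' m ∧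
      (∑ m ∈ range k, r' m) ≤ S/2 ∧ k < n := by
    refine ⟨Nat.find hex, Nat.find_spec hex, ?_, ?_⟩
    · rcases Nat.eq_zero_or_pos (Nat.find hex) with h | h
      · rw [h]; simp; linarith
      · obtain ⟨m, hm⟩ := Nat.exists_eq_succ_of_ne_zero h.ne'
        rw [hm]
        exact le_of_not_gt (Nat.find_min hex (by omega))
    · by_contra h
      push_neg at h
      have := Nat.find_min hex (show n - 1 < Nat.find hex by omega)
      rw [Nat.sub_add_cancel hn, htn] at this
      exact this (by linarith)
  set kk : Fin n := ⟨k, hkn⟩ with hkk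
  refine ⟨fun i => if (i : ℕ) < k then 0 else if (i : ℕ) = k then 1 else 2, ?_⟩
  have hsum0 : ∑ i ∈ Finset.univ.filter (fun i : Fin n => (i : ℕ) < k), r i
      = ∑ m ∈ range k, r' m := by
    calc ∑ i ∈ Finset.univ.filter (fun i : Fin n => (i : ℕ) < k), r i
        = ∑ i : Fin n, if ((i : ℕ) < k) then r' (i : ℕ) else 0 := by
          rw [Finset.sum_filter]
          exact Finset.sum_congr rfl fun i _ => by rw [hr'eq]
      _ = ∑ m ∈ range n, if m < k then r' m else 0 :=
          Fin.sum_univ_eq_sum_range (fun m => if m < k then r' m else 0) n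
      _ = ∑ m ∈ (range n).filter (fun m => m < k), r' m := (Finset.sum_filter _ _).symm
      _ = ∑ m ∈ range k, r' m := by
          congr 1
          ext m
          simp only [mem_filter, mem_range]
          omega
  have hsum1 : ∑ i ∈ Finset.univ.filter (fun i : Fin n => (i : ℕ) = k), r i = r kk := by
    have : Finset.univ.filter (fun i : Fin n => (i : ℕ) = k) = {kk} := by
      ext i
      simp [hkk, Fin.ext_iff]
    rw [this, Finset.sum_singleton]
  have hfib : ∀ g : Fin 3, Finset.univ.filter
      (fun i : Fin n => (if (i : ℕ) < k then 0 else if (i : ℕ) = k then (1 : Fin 3) else 2) = g)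
      = Finset.univ.filter (fun i : Fin n =>
          if g = 0 then (i : ℕ) < k else if g = 1 then (i : ℕ) = k else k < (i : ℕ)) := by
    intro g
    apply Finset.filter_congr
    intro i _
    by_cases h1 : (i : ℕ) < k <;> by_cases h2 : (i : ℕ) = k <;>
      simp [h1, h2] <;> fin_cases g <;> simp <;> omega
  have htot := Finset.sum_fiberwise Finset.univ
    (fun i : Fin n => if (i : ℕ) < k then 0 else if (i : ℕ) = k then (1 : Fin 3) else 2) r
  have key : ∀ g : Fin 3, 2 * ∑ i ∈ Finset.univ.filter
      (fun i : Fin n => (if (i : ℕ) < k then 0 else if (i : ℕ) = k then (1 : Fin 3) else 2) = g),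
      r i ≤ S := by
    have hrk : r' k = r kk := hr'eq kk
    have hk1' : S/2 < ∑ m ∈ range k, r' m + r kk := by
      rw [Finset.sum_range_succ, hrk] at hk1; exact hk1
    have hsplit : ∑ i ∈ Finset.univ.filter (fun i : Fin n => k < (i : ℕ)), r i
        = S - (∑ m ∈ range k, r' m) - r kk := by
      have h3 := Fin.sum_univ_three (fun g : Fin 3 => ∑ i ∈ Finset.univ.filter
        (fun i : Fin n => (if (i : ℕ) < k then 0 else if (i : ℕ) = k then (1 : Fin 3) else 2) = g), r i)
      rw [htot] at h3
      rw [hfib 0, hfib 1, hfib 2] at h3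
      simp only [show ((0:Fin 3) = 0) = True by simp, show ((1:Fin 3) = 0) = False by simp,
        show ((1:Fin 3) = 1) = True by simp, show ((2:Fin 3) = 0) = False by simp,
        show ((2:Fin 3) = 1) = False by simp, if_true, if_false] at h3
      rw [hsum0, hsum1] at h3
      linarith
    have b0 : 2 * ∑ i ∈ Finset.univ.filter (fun i : Fin n => (i : ℕ) < k), r i ≤ S := by
      rw [hsum0]; linarith
    have b1 : 2 * ∑ i ∈ Finset.univ.filter (fun i : Fin n => (i : ℕ) = k), r i ≤ S := by
      rw [hsum1]; exact h2 kk
    have b2 : 2 * ∑ i ∈ Finset.univ.filter (fun i : Fin n => k < (i : ℕ)), r i ≤ S := by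
      rw [hsplit]; linarith
    intro g
    rw [hfib g]
    fin_cases g
    · simpa [Fin.ext_iff] using b0
    · simpa [Fin.ext_iff] using b1
    · simpa [Fin.ext_iff] using b2
  exact key

/-- A closed `n`-gon linkage in `ℝ³` with side lengths `r₁,…,rₙ` exists iff every `rᵢ` is
nonnegative and `2·rᵢ ≤ r₁ + ⋯ + rₙ` for every `i`. -/
theorem closed_linkage_exists_iff (n : ℕ) (hn : 1 ≤ n) (r : Fin n → ℝ) :
    (∃ e : Fin n → EuclideanSpace ℝ (Fin 3),
        (∑ i, e i = 0) ∧ ∀ i, ‖e i‖ = r i) ↔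
      ((∀ i, 0 ≤ r i) ∧ ∀ i, 2 * r i ≤ ∑ j, r j) := by
  classical
  constructor
  · rintro ⟨e, hsum, hnorm⟩
    refine ⟨fun i => (hnorm i) ▸ norm_nonneg _, fun i => ?_⟩
    have h1 : e i + ∑ j ∈ Finset.univ.erase i, e j = 0 := by
      rw [Finset.add_sum_erase Finset.univ e (Finset.mem_univ i)]; exact hsum
    have h2 : e i = -∑ j ∈ Finset.univ.erase i, e j := eq_neg_of_add_eq_zero_left h1
    have h3 : r i ≤ ∑ j ∈ Finset.univ.erase i, r j := by
      calc r i = ‖e i‖ := (hnorm i).symm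
        _ = ‖∑ j ∈ Finset.univ.erase i, e j‖ := by rw [h2, norm_neg]
        _ ≤ ∑ j ∈ Finset.univ.erase i, ‖e j‖ := norm_sum_le _ _
        _ = ∑ j ∈ Finset.univ.erase i, r j := Finset.sum_congr rfl fun j _ => hnorm j
    have h4 : ∑ j ∈ Finset.univ.erase i, r j = (∑ j, r j) - r i :=
      Finset.sum_erase_eq_sub (Finset.mem_univ i)
    rw [h4] at h3
    linarith
  · rintro ⟨h0, h2⟩
    have hS0 : 0 ≤ ∑ j, r j := Finset.sum_nonneg fun j _ => h0 j
    rcases eq_or_lt_of_le hS0 with hS | hS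
    · have hall : ∀ i ∈ Finset.univ, r i = 0 :=
        (Finset.sum_eq_zero_iff_of_nonneg fun j _ => h0 j).mp hS.symm
      exact ⟨fun _ => 0, by simp, fun i => by simp [hall i (Finset.mem_univ i)]⟩
    · obtain ⟨G, hG⟩ := partition3 n r h0 h2 hS
      set s : Fin 3 → ℝ := fun g => ∑ i ∈ Finset.univ.filter (fun i => G i = g), r i with hs
      have hs0 : ∀ g, 0 ≤ s g := fun g => Finset.sum_nonneg fun i _ => h0 i
      have hstot : ∑ g, s g = ∑ j, r j := Finset.sum_fiberwise Finset.univ G r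
      obtain ⟨V, hVsum, hVnorm⟩ := triangle_exists s hs0 (fun g => by
        rw [hstot]; exact hG g)
      refine ⟨fun i => (r i / s (G i)) • V (G i), ?_, ?_⟩
      · have hfib := Finset.sum_fiberwise Finset.univ G
          (fun i => (r i / s (G i)) • V (G i))
        rw [← hfib, ← hVsum]
        refine Finset.sum_congr rfl fun g _ => ?_
        have hcongr : ∑ i ∈ Finset.univ.filter (fun i => G i = g),
            (r i / s (G i)) • V (G i)
            = ∑ i ∈ Finset.univ.filter (fun i => G i = g), (r i / s g) • V g := by
          refine Finset.sum_congr rfl fun i hi => ?_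
          rw [(Finset.mem_filter.mp hi).2]
        rw [hcongr, ← Finset.sum_smul, ← Finset.sum_div]
        rcases eq_or_lt_of_le (hs0 g) with hz | hp
        · rw [show V g = 0 from norm_eq_zero.mp (by rw [hVnorm g, ← hz]), smul_zero]
        · rw [show (∑ i ∈ Finset.univ.filter (fun i => G i = g), r i) = s g from rfl,
            div_self hp.ne', one_smul]
      · intro i
        rw [norm_smul, hVnorm (G i), Real.norm_eq_abs]
        rcases eq_or_lt_of_le (hs0 (G i)) with hz | hp
        · have hri : r i = 0 := by
            have hle : r i ≤ s (G i) := Finset.single_le_sum (fun j _ => h0 j)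
              (Finset.mem_filter.mpr ⟨Finset.mem_univ i, rfl⟩)
            have := h0 i
            linarith [hz.symm ▸ hle]
          rw [hri, ← hz]
          simp
        · rw [abs_of_nonneg (div_nonneg (h0 i) (hs0 (G i))), div_mul_cancel₀ _ hp.ne']
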